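/- Let E be the exterior algebra over a field of characteristic 0 on generators indexed by disjoint finite sets P1, P2 and an extra generator e_i (disjoint from both), with |P_j| = a_j. Writing C = P1 P2, we have d(C) = d(P1) d(e_i P2) + (-1)^{a_1 a_2} d(P2) d(e_i P1), where d is the graded derivation with d(e_a)=1 on all generators. -/

import Mathlib

set_option linter.unusedSectionVars false


variable {K : Type} [Field K] [CharZero K] {α : Type} [LinearOrder α]

/-- The generator `e_a` of the exterior algebra indexed by `a`. -/
noncomputable def gen (K : Type) [Field K] {α : Type} (a : α) :
    ExteriorAlgebra K (α →₀ K) :=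
  ExteriorAlgebra.ι K (Finsupp.single a (1 : K))

/-- For a finite subset `S = {a₁ < ⋯ < a_p}` of the index set, `eS K S` is the ordered
wedge product `e_{a₁} ∧ ⋯ ∧ e_{a_p}`. -/
noncomputable def eS (K : Type) [Field K] {α : Type} [LinearOrder α] (S : Finset α) :
    ExteriorAlgebra K (α →₀ K) :=
  ((S.sort (· ≤ ·)).map (fun a => gen K a)).prod

/-- `IsOSDiff d` says that `d` is the Orlik–Solomon boundary map: the linear map with
`d 1 = 0`, `d e_a = 1`, and the graded Leibniz rule. -/
def IsOSDiff (K : Type) [Field K] {α : Type}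
    (d : ExteriorAlgebra K (α →₀ K) →ₗ[K] ExteriorAlgebra K (α →₀ K)) : Prop :=
  d 1 = 0 ∧ (∀ a : α, d (gen K a) = 1) ∧
    ∀ (p : ℕ) (x y : ExteriorAlgebra K (α →₀ K)),
      x ∈ (LinearMap.range (ExteriorAlgebra.ι K (M := α →₀ K)) ^ p :
        Submodule K (ExteriorAlgebra K (α →₀ K))) →
      d (x * y) = d x * y + ((-1 : K) ^ p) • (x * d y)

open ExteriorAlgebra

private lemma comm_one {m y : ExteriorAlgebra K (α →₀ K)} {q : ℕ}
    (hm : m ∈ LinearMap.range (ι K (M := α →₀ K)))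
    (hy : y ∈ (LinearMap.range (ι K (M := α →₀ K)) ^ q :
      Submodule K (ExteriorAlgebra K (α →₀ K)))) :
    m * y = ((-1 : K) ^ q) • (y * m) := by
  obtain ⟨v, rfl⟩ := hm
  induction hy using Submodule.pow_induction_on_left' with
  | algebraMap r => simp [Algebra.commutes]
  | add x y i hx hy ihx ihy => rw [mul_add, ihx, ihy, add_mul, smul_add]
  | mem_mul m2 hm2 i x hx ih =>
    obtain ⟨w, rfl⟩ := hm2
    have hswap : ι K v * ι K w = -(ι K w * ι K v) :=
      eq_neg_of_add_eq_zero_left (ExteriorAlgebra.ι_add_mul_swap v w)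
    calc ι K v * (ι K w * x)
        = -(ι K w * (ι K v * x)) := by rw [← mul_assoc, hswap, neg_mul, mul_assoc]
      _ = -(ι K w * ((-1 : K) ^ i • (x * ι K v))) := by rw [ih]
      _ = ((-1 : K) ^ (i + 1)) • ((ι K w * x) * ι K v) := by
          rw [mul_smul_comm, mul_assoc, pow_succ, mul_smul, neg_one_smul, smul_neg]

private lemma supercomm {x y : ExteriorAlgebra K (α →₀ K)} {p q : ℕ}
    (hx : x ∈ (LinearMap.range (ι K (M := α →₀ K)) ^ p :
      Submodule K (ExteriorAlgebra K (α →₀ K))))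
    (hy : y ∈ (LinearMap.range (ι K (M := α →₀ K)) ^ q :
      Submodule K (ExteriorAlgebra K (α →₀ K)))) :
    x * y = ((-1 : K) ^ (p * q)) • (y * x) := by
  induction hx using Submodule.pow_induction_on_left' with
  | algebraMap r => simp [Algebra.commutes]
  | add a b i ha hb iha ihb => rw [add_mul, iha, ihb, mul_add, smul_add]
  | mem_mul m hm i a ha ih =>
    calc m * a * y = m * ((-1 : K) ^ (i * q) • (y * a)) := by rw [mul_assoc, ih]
      _ = ((-1 : K) ^ (i * q)) • ((m * y) * a) := by rw [mul_smul_comm, mul_assoc]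
      _ = ((-1 : K) ^ (i * q)) • ((((-1 : K) ^ q) • (y * m)) * a) := by
          rw [comm_one hm hy]
      _ = ((-1 : K) ^ ((i + 1) * q)) • (y * (m * a)) := by
          rw [smul_mul_assoc, smul_smul, ← pow_add, mul_assoc]
          ring_nf

private lemma d_iota (d : ExteriorAlgebra K (α →₀ K) →ₗ[K] ExteriorAlgebra K (α →₀ K))
    (hd : IsOSDiff K d) (v : α →₀ K) :
    ∃ c : K, d (ι K v) = algebraMap K _ c := by
  induction v using Finsupp.induction with
  | zero => exact ⟨0, by simp⟩
  | single_add a b f ha hb ih =>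
    obtain ⟨c, hc⟩ := ih
    refine ⟨b + c, ?_⟩
    have h1 : (Finsupp.single a b : α →₀ K) = b • Finsupp.single a 1 := by
      rw [Finsupp.smul_single, smul_eq_mul, mul_one]
    rw [map_add, map_add, h1, map_smul, map_smul, hc]
    have := hd.2.1 a
    rw [gen] at this
    rw [this, map_add]
    simp [Algebra.algebraMap_eq_smul_one]

private lemma d_mem (d : ExteriorAlgebra K (α →₀ K) →ₗ[K] ExteriorAlgebra K (α →₀ K))
    (hd : IsOSDiff K d) {p : ℕ} {x : ExteriorAlgebra K (α →₀ K)}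
    (hx : x ∈ (LinearMap.range (ι K (M := α →₀ K)) ^ p :
      Submodule K (ExteriorAlgebra K (α →₀ K)))) :
    d x ∈ (LinearMap.range (ι K (M := α →₀ K)) ^ (p - 1) :
      Submodule K (ExteriorAlgebra K (α →₀ K))) ∧ (p = 0 → d x = 0) := by
  induction hx using Submodule.pow_induction_on_left' with
  | algebraMap r =>
    have h0 : d (algebraMap K (ExteriorAlgebra K (α →₀ K)) r) = 0 := by
      rw [Algebra.algebraMap_eq_smul_one, map_smul, hd.1, smul_zero]
    exact ⟨h0 ▸ zero_mem _, fun _ => h0⟩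
  | add a b i ha hb iha ihb =>
    refine ⟨?_, fun h => ?_⟩
    · rw [map_add]; exact add_mem iha.1 ihb.1
    · rw [map_add, iha.2 h, ihb.2 h, add_zero]
  | mem_mul m hm i a ha ih =>
    obtain ⟨v, rfl⟩ := hm
    have hm1 : ι K v ∈ (LinearMap.range (ι K (M := α →₀ K)) ^ 1 :
        Submodule K (ExteriorAlgebra K (α →₀ K))) := by
      rw [pow_one]; exact ⟨v, rfl⟩
    obtain ⟨c, hc⟩ := d_iota d hd v
    have hL := hd.2.2 1 (ι K v) a hm1
    refine ⟨?_, fun h => absurd h (Nat.succ_ne_zero i)⟩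
    rw [hL, hc, Nat.succ_sub_one]
    have h1 : algebraMap K (ExteriorAlgebra K (α →₀ K)) c * a = c • a := by
      rw [Algebra.algebraMap_eq_smul_one, smul_mul_assoc, one_mul]
    rw [h1]
    refine add_mem (Submodule.smul_mem _ _ ha) (Submodule.smul_mem _ _ ?_)
    rcases i with - | j
    · rw [ih.2 rfl, mul_zero]; exact zero_mem _
    · have : ι K v * d a ∈ (LinearMap.range (ι K (M := α →₀ K)) *
        LinearMap.range (ι K (M := α →₀ K)) ^ j : Submodule K _) := by
        refine Submodule.mul_mem_mul ⟨v, rfl⟩ ?_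
        simpa using ih.1
      rwa [← pow_succ'] at this

private lemma genProd_mem (l : List α) :
    (l.map (gen K)).prod ∈ (LinearMap.range (ι K (M := α →₀ K)) ^ l.length :
      Submodule K (ExteriorAlgebra K (α →₀ K))) := by
  induction l with
  | nil => rw [List.map_nil, List.prod_nil, List.length_nil, pow_zero]
           exact Submodule.one_le.mp le_rfl
  | cons a l ih =>
    rw [List.map_cons, List.prod_cons, List.length_cons, pow_succ']
    exact Submodule.mul_mem_mul ⟨_, rfl⟩ ih

private lemma eS_mem (S : Finset α) :
    eS K S ∈ (LinearMap.range (ι K (M := α →₀ K)) ^ S.card :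
      Submodule K (ExteriorAlgebra K (α →₀ K))) := by
  have := genProd_mem (K := K) (S.sort (· ≤ ·))
  rw [Finset.length_sort] at this
  exact this

private lemma sign1 (p q : ℕ) :
    ((-1 : K) ^ ((p + 1) * (q + 1))) * ((-1 : K) ^ (q * (p + 1))) = (-1 : K) ^ (p + 1) := by
  rw [← pow_add]
  have h : (p + 1) * (q + 1) + q * (p + 1) = (2 * q + 1) * (p + 1) := by ring
  rw [h, pow_mul]
  have h2 : (-1 : K) ^ (2 * q + 1) = -1 := by
    rw [pow_succ, pow_mul, neg_one_sq, one_pow, one_mul]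
  rw [h2]

private lemma sign2 (p q : ℕ) :
    ((-1 : K) ^ ((p + 1) * (q + 1))) * (((-1 : K) ^ (q * (p + 1))) * ((-1 : K) ^ p)) = -1 := by
  rw [← mul_assoc, sign1, ← pow_add]
  have h : p + 1 + p = 2 * p + 1 := by ring
  rw [h, pow_succ, pow_mul, neg_one_sq, one_pow, one_mul]

/-- For a cycle `C = P1 P2` with chord `i`:
`d(C) = d(P1) d(e_i P2) + (-1)^{a1 a2} d(P2) d(e_i P1)`. -/
theorem stmt4 [Fintype α]
    (d : ExteriorAlgebra K (α →₀ K) →ₗ[K] ExteriorAlgebra K (α →₀ K))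
    (hd : IsOSDiff K d) (i : α) (P1 P2 : Finset α)
    (h12 : Disjoint P1 P2) (hi1 : i ∉ P1) (hi2 : i ∉ P2) :
    d (eS K P1 * eS K P2) =
        d (eS K P1) * d (gen K i * eS K P2)
      + ((-1 : K) ^ (P1.card * P2.card)) • (d (eS K P2) * d (gen K i * eS K P1)) := by
  obtain ⟨he1, hgen, hLeib⟩ := hd
  have hgi : gen K i ∈ (LinearMap.range (ι K (M := α →₀ K)) ^ 1 :
      Submodule K (ExteriorAlgebra K (α →₀ K))) := by
    rw [pow_one]; exact ⟨_, rfl⟩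
  have hdgB : ∀ B : ExteriorAlgebra K (α →₀ K),
      d (gen K i * B) = B - gen K i * d B := by
    intro B
    rw [hLeib 1 (gen K i) B hgi, hgen i, one_mul, pow_one, neg_one_smul, ← sub_eq_add_neg]
  rcases Finset.eq_empty_or_nonempty P1 with rfl | hP1
  · have hA : eS K (∅ : Finset α) = 1 := by simp [eS]
    simp only [hA, one_mul, he1, zero_mul, zero_add, Finset.card_empty, pow_zero, one_smul,
      mul_one, hgen i]
  rcases Finset.eq_empty_or_nonempty P2 with rfl | hP2
  · have hB : eS K (∅ : Finset α) = 1 := by simp [eS]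
    simp only [hB, mul_one, he1, zero_mul, Finset.card_empty, mul_zero, pow_zero, one_smul,
      hgen i, add_zero]
  obtain ⟨p, hp⟩ : ∃ p, P1.card = p + 1 :=
    ⟨P1.card - 1, (Nat.succ_pred_eq_of_pos (Finset.card_pos.mpr hP1)).symm⟩
  obtain ⟨q, hq⟩ : ∃ q, P2.card = q + 1 :=
    ⟨P2.card - 1, (Nat.succ_pred_eq_of_pos (Finset.card_pos.mpr hP2)).symm⟩
  have hA := eS_mem (K := K) P1
  have hB := eS_mem (K := K) P2
  rw [hp] at hA
  rw [hq] at hB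
  have hdA : d (eS K P1) ∈ (LinearMap.range (ι K (M := α →₀ K)) ^ p :
      Submodule K (ExteriorAlgebra K (α →₀ K))) := by
    have := (d_mem d ⟨he1, hgen, hLeib⟩ hA).1
    simpa using this
  have hdB : d (eS K P2) ∈ (LinearMap.range (ι K (M := α →₀ K)) ^ q :
      Submodule K (ExteriorAlgebra K (α →₀ K))) := by
    have := (d_mem d ⟨he1, hgen, hLeib⟩ hB).1
    simpa using this
  have heA : gen K i * d (eS K P1) ∈ (LinearMap.range (ι K (M := α →₀ K)) ^ (p + 1) :
      Submodule K (ExteriorAlgebra K (α →₀ K))) := by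
    rw [pow_succ']
    exact Submodule.mul_mem_mul ⟨_, rfl⟩ hdA
  have c1 : d (eS K P2) * eS K P1 =
      ((-1 : K) ^ (q * (p + 1))) • (eS K P1 * d (eS K P2)) := supercomm hdB hA
  have c2 : d (eS K P2) * (gen K i * d (eS K P1)) =
      ((-1 : K) ^ (q * (p + 1))) • ((gen K i * d (eS K P1)) * d (eS K P2)) :=
    supercomm hdB heA
  have c3 : gen K i * d (eS K P1) =
      ((-1 : K) ^ p) • (d (eS K P1) * gen K i) := by
    have := supercomm hgi hdA
    simpa using this
  rw [hp, hq, hLeib (p + 1) _ _ hA, hdgB (eS K P2), hdgB (eS K P1), mul_sub, mul_sub,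
    smul_sub, c2, c3]
  rw [c1]
  simp only [smul_mul_assoc, smul_smul, smul_sub, mul_assoc]
  have h2 : ∀ n : ℕ, (-1 : K) ^ (n * 2) = 1 := fun n => by
    rw [pow_mul', neg_one_sq, one_pow]
  match_scalars
  · ring
  · ring_nf
    simp [h2]
  · ring_nf
    simp [h2]
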